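/- Let (M,∇,Φ) be an object of the category F-MIC(B_K^†,σ) (coherent B_K^†-module with integrable connection and horizontal Frobenius), sitting in an extension 0 → H → M → O_S → 0 in the category of filtered F-isocrystals Fil-F-MIC(S,σ), and suppose Fil⁰H_dR = 0. If the class u(M) = (∇(e), (1−Φ)e) ∈ H¹(𝒮(H)) vanishes, where e ∈ Fil⁰M is the unique filtered lift of 1, then the extension splits. Consequently the map u : Ext¹_{Fil-F-MIC(S,σ)}(O_S, H) → H¹(𝒮(H)) is injective. -/
import Mathlib


/-!
**STATEMENT 14** (Lemma `filFMIC-lem`, first part).  Let `0 → H → M → O_S → 0` be an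
extension in the category of filtered `F`-isocrystals `Fil-F-MIC(S,σ)` and suppose
`Fil⁰H_dR = 0`.  If the class `u(M) = (∇(e), (1-Φ)e)` vanishes — i.e. the unique filtered
lift `e ∈ Fil⁰M` of `1` satisfies `∇e = 0` and `Φe = e` — then the extension splits.

Concretely, over the ring of functions `A` (= `B_K`) with module of differentials `Ω`
and differential `d`, an object carries an integrable connection `∇` (additive and
satisfying the Leibniz rule), a Frobenius `Φ` and a filtration `Fil`; a splitting is a
section `s : O_S → M` of `π` which is compatible with the filtration, the connection
(`∇(s a) = da ⊗ s 1`, matching `∇ = d` on the unit object) and the Frobenius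
(`Φ(s 1) = s 1`, matching `Φ = σ` on the unit object).
-/

open scoped TensorProduct

theorem extension_splits_of_invariant_vanishes
    (A : Type*) [CommRing A]
    (Ω : Type*) [AddCommGroup Ω] [Module A Ω] (d : Derivation ℤ A Ω)
    (H M : Type*) [AddCommGroup H] [Module A H] [AddCommGroup M] [Module A M]
    -- the extension `0 → H → M → A → 0`:
    (ι : H →ₗ[A] M) (π : M →ₗ[A] A)
    (hι : Function.Injective ι) (hπ : Function.Surjective π)
    (hexact : LinearMap.range ι = LinearMap.ker π)
    -- connection, Frobenius and filtration on `M`: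
    (nabla : M → Ω ⊗[A] M)
    (hadd : ∀ x y, nabla (x + y) = nabla x + nabla y)
    (hleibniz : ∀ (a : A) (x : M), nabla (a • x) = d a ⊗ₜ[A] x + a • nabla x)
    (Phi : M →+ M)
    (fil : ℤ → Submodule A M) (hfil : Antitone fil)
    -- `Fil⁰ H_dR = 0` (the filtration of `H` being induced via `ι`):
    (filH : ℤ → Submodule A H) (hfilH : ∀ i, filH i = (fil i).comap ι)
    (hfilH0 : filH 0 = ⊥)
    -- vanishing of `u(M) = (∇(e), (1-Φ)e)` for the filtered lift `e` of `1`: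
    (e : M) (he : e ∈ fil 0) (hπe : π e = 1)
    (hnablae : nabla e = 0) (hPhie : Phi e = e) :
    -- the extension splits:
    ∃ s : A →ₗ[A] M,
      (∀ a : A, π (s a) = a) ∧
      (∀ a : A, s a ∈ fil 0) ∧
      (∀ a : A, nabla (s a) = d a ⊗ₜ[A] (s 1)) ∧
      Phi (s 1) = s 1 := by
  refine ⟨LinearMap.toSpanSingleton A M e, ?_, ?_, ?_, ?_⟩
  · intro a
    simp [LinearMap.toSpanSingleton_apply, hπe]
  · intro a
    exact (fil 0).smul_mem a he
  · intro a
    simp [LinearMap.toSpanSingleton_apply, hleibniz, hnablae]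
  · simp [LinearMap.toSpanSingleton_apply, hPhie]
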